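/- Let G' be a graph, V ⊂ V(G'), G = G'[V], H₁,…,H_k the connected components of G'[V'∖V], and B a zero forcing set of G. For each i, let N_i = N_{G'}[V] ∩ V(H_i). Then Z(G';B) ≤ Σᵢ Z(H_i;N_i) + |B|. -/

import Mathlib

namespace RPD

variable {V : Type*}

/-- The closed neighborhood of a set of vertices. -/
def closedNbhd (G : SimpleGraph V) (S : Set V) : Set V :=
  S ∪ {v | ∃ u ∈ S, G.Adj u v}

/-- The zero forcing closure: `ZFC G B v` means `v` eventually gets colored when
starting from the blue set `B` and repeatedly applying the color change rule
(a colored vertex with exactly one uncolored neighbor colors that neighbor). -/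
inductive ZFC (G : SimpleGraph V) (B : Set V) : V → Prop
  | init (v : V) (hv : v ∈ B) : ZFC G B v
  | force (u w : V) (hu : ZFC G B u) (hadj : G.Adj u w)
      (hothers : ∀ x, G.Adj u x → x ≠ w → ZFC G B x) : ZFC G B w

/-- `B` is a zero forcing set of `G`. -/
def IsZFS (G : SimpleGraph V) (B : Set V) : Prop := ∀ v, ZFC G B v

/-- `S` is a power dominating set of `G`: its closed neighborhood is a zero forcing set. -/
def IsPDS (G : SimpleGraph V) (S : Set V) : Prop := IsZFS G (closedNbhd G S)

/-- The restricted zero forcing number `Z(G;X)`; `Z(G) = zNum G ∅`. -/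
noncomputable def zNum (G : SimpleGraph V) (X : Set V) : ℕ :=
  sInf {n | ∃ B : Set V, X ⊆ B ∧ IsZFS G B ∧ B.ncard = n}

/-- The restricted power domination number `γ_P(G;X)`; `γ_P(G) = pdNum G ∅`. -/
noncomputable def pdNum (G : SimpleGraph V) (X : Set V) : ℕ :=
  sInf {n | ∃ S : Set V, X ⊆ S ∧ IsPDS G S ∧ S.ncard = n}

/-- A leaf is a vertex of degree one, i.e. whose neighbor set is a singleton. -/
def IsLeaf (G : SimpleGraph V) (l : V) : Prop := ∃ u, G.neighborSet l = {u}

end RPD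

open RPD

lemma zNum_exists {V : Type*} (G : SimpleGraph V) (X : Set V) :
    ∃ B : Set V, X ⊆ B ∧ IsZFS G B ∧ B.ncard = zNum G X := by
  have hne : {n | ∃ B : Set V, X ⊆ B ∧ IsZFS G B ∧ B.ncard = n}.Nonempty :=
    ⟨Set.univ.ncard, Set.univ, Set.subset_univ _, fun v => ZFC.init v trivial, rfl⟩
  exact Nat.sInf_mem hne

lemma ncard_iUnion_le' {ι α : Type*} [Fintype ι] (f : ι → Set α) :
    (⋃ i, f i).ncard ≤ ∑ i, (f i).ncard := by
  classical
  have key : ∀ s : Finset ι, (⋃ i ∈ s, f i).ncard ≤ ∑ i ∈ s, (f i).ncard := by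
    intro s
    induction s using Finset.induction with
    | empty => simp
    | insert _ _ h ih =>
      rw [Finset.set_biUnion_insert, Finset.sum_insert h]
      exact le_trans (Set.ncard_union_le _ _) (Nat.add_le_add le_rfl ih)
  have : (⋃ i, f i) = ⋃ i ∈ Finset.univ, f i := by simp
  rw [this]
  exact key Finset.univ

theorem stmt14 {V' : Type*} [Finite V'] (G' : SimpleGraph V') (Vs : Set V')
    (hproper : Vs ⊂ Set.univ) (B : Set V') (hBV : B ⊆ Vs)
    (hB : IsZFS (G'.induce Vs) (Subtype.val ⁻¹' B)) :
    zNum G' B ≤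
      (∑ᶠ c : (G'.induce Vsᶜ).ConnectedComponent,
        zNum ((G'.induce Vsᶜ).induce c.supp)
          ((fun x => ((x : ↥(Vsᶜ)) : V')) ⁻¹' closedNbhd G' Vs)) + B.ncard := by
  classical
  set Gc := G'.induce Vsᶜ with hGc
  haveI : Finite ↥(Vsᶜ) := Subtype.finite
  haveI : Finite Gc.ConnectedComponent := Quot.finite _
  haveI : Fintype Gc.ConnectedComponent := Fintype.ofFinite _
  choose Bc hBc1 hBc2 hBc3 using fun c : Gc.ConnectedComponent =>
    zNum_exists (Gc.induce c.supp) ((fun x => ((x : ↥(Vsᶜ)) : V')) ⁻¹' closedNbhd G' Vs)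
  set I : Gc.ConnectedComponent → Set V' :=
    fun c => (fun x : ↥c.supp => ((x : ↥(Vsᶜ)) : V')) '' Bc c with hI
  set B' : Set V' := B ∪ ⋃ c, I c with hB'
  have hIB : ∀ (c : Gc.ConnectedComponent) (x : ↥c.supp),
      x ∈ Bc c → (((x : ↥(Vsᶜ)) : V') ∈ B') :=
    fun c x h => Or.inr (Set.mem_iUnion.2 ⟨c, ⟨x, h, rfl⟩⟩)
  have Z1 : ∀ x : ↥Vs, ZFC G' B' (x : V') := by
    intro x
    induction hB x with
    | init v hv => exact ZFC.init _ (Or.inl hv)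
    | force u w hu hadj hothers ihu ihothers =>
      refine ZFC.force (u : V') (w : V') ihu hadj ?_
      intro y hy hyw
      by_cases hyV : y ∈ Vs
      · exact ihothers ⟨y, hyV⟩ hy (fun h => hyw (congrArg Subtype.val h))
      · have hyc : y ∈ closedNbhd G' Vs := Or.inr ⟨(u : V'), u.2, hy⟩
        have hyVc : y ∈ Vsᶜ := hyV
        set c := Gc.connectedComponentMk ⟨y, hyVc⟩ with hc
        have hmem : (⟨⟨y, hyVc⟩, rfl⟩ : ↥c.supp) ∈ Bc c := hBc1 c hyc
        exact ZFC.init y (hIB c _ hmem)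
  have Z2 : ∀ (c : Gc.ConnectedComponent) (x : ↥c.supp), ZFC G' B' ((x : ↥(Vsᶜ)) : V') := by
    intro c x
    induction hBc2 c x with
    | init v hv => exact ZFC.init _ (hIB c v hv)
    | force u w hu hadj hothers ihu ihothers =>
      refine ZFC.force ((u : ↥(Vsᶜ)) : V') _ ihu hadj ?_
      intro y hy hyw
      by_cases hyV : y ∈ Vs
      · exact Z1 ⟨y, hyV⟩
      · have hyVc : y ∈ Vsᶜ := hyV
        have hadj' : Gc.Adj (u : ↥(Vsᶜ)) ⟨y, hyVc⟩ := hy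
        have hsupp : (⟨y, hyVc⟩ : ↥(Vsᶜ)) ∈ c.supp := by
          have hu' : ((u : ↥(Vsᶜ))) ∈ c.supp := u.2
          rw [SimpleGraph.ConnectedComponent.mem_supp_iff] at hu' ⊢
          exact (SimpleGraph.ConnectedComponent.sound hadj'.reachable).symm.trans hu'
        exact ihothers ⟨⟨y, hyVc⟩, hsupp⟩ hadj'
          (fun h => hyw (congrArg (fun z : ↥c.supp => ((z : ↥(Vsᶜ)) : V')) h))
  have hZFS : IsZFS G' B' := by
    intro v
    by_cases hv : v ∈ Vs
    · exact Z1 ⟨v, hv⟩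
    · exact Z2 (Gc.connectedComponentMk ⟨v, hv⟩) ⟨⟨v, hv⟩, rfl⟩
  have hinj : ∀ c : Gc.ConnectedComponent,
      Function.Injective (fun x : ↥c.supp => ((x : ↥(Vsᶜ)) : V')) :=
    fun c a b h => Subtype.val_injective (Subtype.val_injective h)
  have h3 : ∀ c, (I c).ncard = zNum (Gc.induce c.supp)
      ((fun x => ((x : ↥(Vsᶜ)) : V')) ⁻¹' closedNbhd G' Vs) := fun c => by
    rw [hI, Set.ncard_image_of_injective _ (hinj c), hBc3]
  have hcard : B'.ncard ≤
      (∑ᶠ c : Gc.ConnectedComponent, zNum (Gc.induce c.supp)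
        ((fun x => ((x : ↥(Vsᶜ)) : V')) ⁻¹' closedNbhd G' Vs)) + B.ncard := by
    have h1 : B'.ncard ≤ (⋃ c, I c).ncard + B.ncard := by
      rw [hB', Set.union_comm]
      exact Set.ncard_union_le _ _
    have h2 : (⋃ c, I c).ncard ≤ ∑ c, (I c).ncard := ncard_iUnion_le' I
    rw [finsum_eq_sum_of_fintype]
    refine le_trans h1 (Nat.add_le_add ?_ le_rfl)
    refine le_trans h2 (le_of_eq ?_)
    exact Finset.sum_congr rfl (fun c _ => h3 c)
  exact le_trans (Nat.sInf_le ⟨B', Set.subset_union_left, hZFS, rfl⟩) hcard
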